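/- The minimum of cost(S) over all bisections S of G is at least 3β+T if and only if there is no pair i,j∈{1,…,n} with i+j≤n and a_i + b_j < c_{i+j}. -/
import Mathlib


open Finset

namespace SCLB

inductive V (n : ℕ) : Type
  | u : V n
  | v : V n
  | A : Fin n → V n
  | B : Fin n → V n
  | C : Fin n → V n
  deriving DecidableEq, Fintype

/-- Edges: `(p, some i)` is the `i`-th edge (0-indexed) on path `p` (`p = 0,1,2` for
`P_A, P_B, P_C`), joining the `(i+1)`-st path vertex to the next one; `(p, none)` is the
special edge `e_A`, `e_B`, `e_C` respectively. -/
abbrev E (n : ℕ) := Fin 3 × Option (Fin n)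

def Tsum (n : ℕ) (a b c : Fin n → ℕ) : ℕ := ∑ i, (a i + b i + c i)

def beta (n : ℕ) (a b c : Fin n → ℕ) : ℕ := 4 * Tsum n a b c * n ^ 2

def firstV {n : ℕ} (f : Fin n → V n) (dflt : V n) : V n :=
  if h : 0 < n then f ⟨0, h⟩ else dflt

def nextV {n : ℕ} (f : Fin n → V n) (top : V n) (i : Fin n) : V n :=
  if h : i.val + 1 < n then f ⟨i.val + 1, h⟩ else top

/-- The two endpoints of each edge. -/
def ends (n : ℕ) : E n → V n × V n
  | (p, none) =>
      if p = 0 then (V.v, firstV V.A V.u)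
      else if p = 1 then (V.v, firstV V.B V.u)
      else (V.u, firstV V.C V.v)
  | (p, some i) =>
      if p = 0 then (V.A i, nextV V.A V.u i)
      else if p = 1 then (V.B i, nextV V.B V.u i)
      else (V.C i, nextV V.C V.v i)

/-- Edge costs. -/
def ecost (n : ℕ) (a b c : Fin n → ℕ) : E n → ℚ
  | (_, none) => 1210 * (n : ℚ) ^ 2 * (2 * (beta n a b c : ℚ) + (Tsum n a b c : ℚ))
  | (p, some i) =>
      if p = 0 then (beta n a b c : ℚ) + (a i : ℚ)
      else if p = 1 then (beta n a b c : ℚ) + (b i : ℚ)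
      else (beta n a b c : ℚ) + (Tsum n a b c : ℚ) - (c i : ℚ)

/-- Vertex weights. -/
def wt (n : ℕ) : V n → ℚ
  | V.u => 10 * n
  | V.v => 11 * n
  | _ => 1

/-- The cut of `S`: edges with exactly one endpoint in `S`. -/
def cut (n : ℕ) (S : Finset (V n)) : Finset (E n) :=
  Finset.univ.filter fun e => ¬(((ends n e).1 ∈ S) ↔ ((ends n e).2 ∈ S))

def cutCost (n : ℕ) (a b c : Fin n → ℕ) (S : Finset (V n)) : ℚ :=
  ∑ e ∈ cut n S, ecost n a b c e

def wOf (n : ℕ) (S : Finset (V n)) : ℚ := ∑ x ∈ S, wt n x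

def quotientVal (n : ℕ) (a b c : Fin n → ℕ) (S : Finset (V n)) : ℚ :=
  cutCost n a b c S / min (wOf n S) (wOf n Sᶜ)

def sparsity (n : ℕ) (a b c : Fin n → ℕ) (S : Finset (V n)) : ℚ :=
  cutCost n a b c S / (wOf n S * wOf n Sᶜ)

def IsBisection (n : ℕ) (S : Finset (V n)) : Prop :=
  wOf n S = 12 * n ∧ wOf n Sᶜ = 12 * n

def PA (n : ℕ) : Finset (E n) := Finset.univ.filter fun e => e.1 = 0
def PB (n : ℕ) : Finset (E n) := Finset.univ.filter fun e => e.1 = 1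
def PC (n : ℕ) : Finset (E n) := Finset.univ.filter fun e => e.1 = 2


/-! ### Auxiliary lemmas -/

def vEquiv (n : ℕ) : V n ≃ (Unit ⊕ Unit ⊕ Fin n ⊕ Fin n ⊕ Fin n) where
  toFun x := match x with
    | V.u => .inl ()
    | V.v => .inr (.inl ())
    | V.A i => .inr (.inr (.inl i))
    | V.B i => .inr (.inr (.inr (.inl i)))
    | V.C i => .inr (.inr (.inr (.inr i)))
  invFun y := match y with
    | .inl _ => V.u
    | .inr (.inl _) => V.v
    | .inr (.inr (.inl i)) => V.A i
    | .inr (.inr (.inr (.inl i))) => V.B i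
    | .inr (.inr (.inr (.inr i))) => V.C i
  left_inv x := by cases x <;> rfl
  right_inv y := by rcases y with _ | (_ | (_ | (_ | _))) <;> rfl

lemma sum_V {n : ℕ} (f : V n → ℚ) :
    ∑ x, f x = f V.u + f V.v + ((∑ i, f (V.A i)) + (∑ i, f (V.B i)) + ∑ i, f (V.C i)) := by
  rw [← Equiv.sum_comp (vEquiv n).symm f]
  simp [Fintype.sum_sum_type, vEquiv]
  ring

lemma wOf_eq {n : ℕ} (S : Finset (V n)) :
    wOf n S = (if V.u ∈ S then 10 * (n : ℚ) else 0) + (if V.v ∈ S then 11 * (n : ℚ) else 0)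
      + (((univ.filter fun m : Fin n => V.A m ∈ S).card
        + (univ.filter fun m : Fin n => V.B m ∈ S).card
        + (univ.filter fun m : Fin n => V.C m ∈ S).card : ℕ) : ℚ) := by
  have : wOf n S = ∑ x : V n, if x ∈ S then wt n x else 0 := by
    rw [wOf, Finset.sum_ite_mem, Finset.univ_inter]
  rw [this, sum_V]
  simp [wt, Finset.sum_boole]

lemma wOf_add_compl {n : ℕ} (S : Finset (V n)) : wOf n S + wOf n Sᶜ = 24 * n := by
  have : wOf n S + wOf n Sᶜ = ∑ x : V n, wt n x := by
    rw [wOf, wOf, Finset.sum_add_sum_compl]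
  rw [this, sum_V]
  simp [wt]
  ring

/-! ### Flip lemmas -/

lemma exists_flip (h : ℕ → Prop) : ∀ n, ¬(h 0 ↔ h n) → ∃ m, m < n ∧ ¬(h m ↔ h (m + 1)) := by
  intro n
  induction n with
  | zero => intro hc; exact absurd Iff.rfl hc
  | succ k ih =>
    intro hc
    by_cases hk : h k ↔ h (k + 1)
    · obtain ⟨m, hm, hflip⟩ := ih (fun hx => hc (hx.trans hk))
      exact ⟨m, Nat.lt_succ_of_lt hm, hflip⟩
    · exact ⟨k, Nat.lt_succ_self k, hk⟩

lemma iff_of_no_flip (h : ℕ → Prop) (s t : ℕ) (hst : s ≤ t)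
    (hno : ∀ m, s ≤ m → m < t → (h m ↔ h (m + 1))) : h s ↔ h t := by
  induction t, hst using Nat.le_induction with
  | base => exact Iff.rfl
  | succ k hk ih =>
    exact (ih fun m hm hmk => hno m hm (Nat.lt_succ_of_lt hmk)).trans
      (hno k hk (Nat.lt_succ_self k))

/-! ### Path indicator functions -/

def hA (n : ℕ) (S : Finset (V n)) (m : ℕ) : Prop :=
  if h : m < n then V.A ⟨m, h⟩ ∈ S else V.u ∈ S

def hB (n : ℕ) (S : Finset (V n)) (m : ℕ) : Prop :=
  if h : m < n then V.B ⟨m, h⟩ ∈ S else V.u ∈ S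

def hC (n : ℕ) (S : Finset (V n)) (m : ℕ) : Prop :=
  if h : m < n then V.C ⟨m, h⟩ ∈ S else V.v ∈ S

lemma mem_cut_iff {n : ℕ} (S : Finset (V n)) (e : E n) :
    e ∈ cut n S ↔ ¬(((ends n e).1 ∈ S) ↔ ((ends n e).2 ∈ S)) := by
  simp [cut]

lemma mem_cut_A {n : ℕ} (S : Finset (V n)) (m : Fin n) :
    ((0, some m) : E n) ∈ cut n S ↔ ¬(hA n S m.val ↔ hA n S (m.val + 1)) := by
  rw [mem_cut_iff]
  have hnext : ((nextV V.A V.u m) ∈ S) ↔ hA n S (m.val + 1) := by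
    unfold nextV hA
    by_cases h : m.val + 1 < n
    · rw [dif_pos h, dif_pos h]
    · rw [dif_neg h, dif_neg h]
  have hcur : hA n S m.val ↔ (V.A m ∈ S) := by
    unfold hA; rw [dif_pos m.isLt]
  show ¬(V.A m ∈ S ↔ nextV V.A V.u m ∈ S) ↔ _
  rw [hnext, hcur]

lemma mem_cut_B {n : ℕ} (S : Finset (V n)) (m : Fin n) :
    ((1, some m) : E n) ∈ cut n S ↔ ¬(hB n S m.val ↔ hB n S (m.val + 1)) := by
  rw [mem_cut_iff]
  have hnext : ((nextV V.B V.u m) ∈ S) ↔ hB n S (m.val + 1) := by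
    unfold nextV hB
    by_cases h : m.val + 1 < n
    · rw [dif_pos h, dif_pos h]
    · rw [dif_neg h, dif_neg h]
  have hcur : hB n S m.val ↔ (V.B m ∈ S) := by
    unfold hB; rw [dif_pos m.isLt]
  show ¬(V.B m ∈ S ↔ nextV V.B V.u m ∈ S) ↔ _
  rw [hnext, hcur]

lemma mem_cut_C {n : ℕ} (S : Finset (V n)) (m : Fin n) :
    ((2, some m) : E n) ∈ cut n S ↔ ¬(hC n S m.val ↔ hC n S (m.val + 1)) := by
  rw [mem_cut_iff]
  have hnext : ((nextV V.C V.v m) ∈ S) ↔ hC n S (m.val + 1) := by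
    unfold nextV hC
    by_cases h : m.val + 1 < n
    · rw [dif_pos h, dif_pos h]
    · rw [dif_neg h, dif_neg h]
  have hcur : hC n S m.val ↔ (V.C m ∈ S) := by
    unfold hC; rw [dif_pos m.isLt]
  show ¬(V.C m ∈ S ↔ nextV V.C V.v m ∈ S) ↔ _
  rw [hnext, hcur]

lemma mem_cut_eA {n : ℕ} (hn : 0 < n) (S : Finset (V n)) :
    ((0, none) : E n) ∈ cut n S ↔ ¬(V.v ∈ S ↔ hA n S 0) := by
  rw [mem_cut_iff]
  have : (firstV V.A V.u ∈ S) ↔ hA n S 0 := by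
    unfold firstV hA; rw [dif_pos hn, dif_pos hn]
  show ¬(V.v ∈ S ↔ firstV V.A V.u ∈ S) ↔ _
  rw [this]

lemma mem_cut_eB {n : ℕ} (hn : 0 < n) (S : Finset (V n)) :
    ((1, none) : E n) ∈ cut n S ↔ ¬(V.v ∈ S ↔ hB n S 0) := by
  rw [mem_cut_iff]
  have : (firstV V.B V.u ∈ S) ↔ hB n S 0 := by
    unfold firstV hB; rw [dif_pos hn, dif_pos hn]
  show ¬(V.v ∈ S ↔ firstV V.B V.u ∈ S) ↔ _
  rw [this]

lemma mem_cut_eC {n : ℕ} (hn : 0 < n) (S : Finset (V n)) :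
    ((2, none) : E n) ∈ cut n S ↔ ¬(V.u ∈ S ↔ hC n S 0) := by
  rw [mem_cut_iff]
  have : (firstV V.C V.v ∈ S) ↔ hC n S 0 := by
    unfold firstV hC; rw [dif_pos hn, dif_pos hn]
  show ¬(V.u ∈ S ↔ firstV V.C V.v ∈ S) ↔ _
  rw [this]

/-! ### Cost basics -/

section costs
variable {n : ℕ} (a b c : Fin n → ℕ)

lemma ecost_A (i : Fin n) : ecost n a b c (0, some i) = (beta n a b c : ℚ) + a i := rfl
lemma ecost_B (i : Fin n) : ecost n a b c (1, some i) = (beta n a b c : ℚ) + b i := rfl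
lemma ecost_C (i : Fin n) :
    ecost n a b c (2, some i) = (beta n a b c : ℚ) + (Tsum n a b c : ℚ) - c i := rfl
lemma ecost_none (p : Fin 3) :
    ecost n a b c (p, none) = 1210 * (n : ℚ) ^ 2 * (2 * (beta n a b c : ℚ) + (Tsum n a b c : ℚ)) := rfl

lemma c_le_T (i : Fin n) : c i ≤ Tsum n a b c := by
  calc c i ≤ a i + b i + c i := by omega
  _ ≤ Tsum n a b c := Finset.single_le_sum (f := fun j => a j + b j + c j) (fun j _ => Nat.zero_le _) (Finset.mem_univ i)

lemma ecost_ge_beta (e : E n) : (beta n a b c : ℚ) ≤ ecost n a b c e := by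
  obtain ⟨p, o⟩ := e
  have hT : (0 : ℚ) ≤ (Tsum n a b c : ℚ) := Nat.cast_nonneg _
  have hbq : (0 : ℚ) ≤ (beta n a b c : ℚ) := Nat.cast_nonneg _
  cases o with
  | none =>
    rw [ecost_none]
    rcases Nat.eq_zero_or_pos n with h | h
    · simp [beta, h]
    · have hn1 : (1 : ℚ) ≤ (n : ℚ) ^ 2 := by
        have : (1:ℚ) ≤ (n:ℚ) := by exact_mod_cast h
        nlinarith
      nlinarith
  | some i =>
    have hi3 : p = 0 ∨ p = 1 ∨ p = 2 := by omega
    rcases hi3 with rfl | rfl | rfl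
    · rw [ecost_A]; have : (0:ℚ) ≤ (a i : ℚ) := Nat.cast_nonneg _; linarith
    · rw [ecost_B]; have : (0:ℚ) ≤ (b i : ℚ) := Nat.cast_nonneg _; linarith
    · rw [ecost_C]
      have : (c i : ℚ) ≤ (Tsum n a b c : ℚ) := by exact_mod_cast c_le_T a b c i
      linarith

lemma ecost_nonneg (e : E n) : (0 : ℚ) ≤ ecost n a b c e :=
  le_trans (Nat.cast_nonneg _) (ecost_ge_beta a b c e)

lemma beta_ge_T (hn : 0 < n) : (Tsum n a b c : ℚ) ≤ (beta n a b c : ℚ) := by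
  have : Tsum n a b c ≤ beta n a b c := by
    have : 1 ≤ n ^ 2 := Nat.one_le_pow _ _ hn
    calc Tsum n a b c = Tsum n a b c * 1 := (mul_one _).symm
    _ ≤ 4 * Tsum n a b c * n ^ 2 := by
        apply Nat.mul_le_mul _ this; omega
    _ = beta n a b c := rfl
  exact_mod_cast this

lemma ecost_none_ge (hn : 0 < n) (p : Fin 3) :
    3 * (beta n a b c : ℚ) + (Tsum n a b c : ℚ) ≤ ecost n a b c (p, none) := by
  rw [ecost_none]
  have hT : (0 : ℚ) ≤ (Tsum n a b c : ℚ) := Nat.cast_nonneg _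
  have hbq : (0 : ℚ) ≤ (beta n a b c : ℚ) := Nat.cast_nonneg _
  have hn1 : (1 : ℚ) ≤ (n : ℚ) ^ 2 := by
    have : (1:ℚ) ≤ (n:ℚ) := by exact_mod_cast hn
    nlinarith
  nlinarith

end costs

lemma prefix_char (h : ℕ → Prop) (n i : ℕ) (hin : i < n) (h0 : h 0) (hnn : ¬ h n)
    (huniq : ∀ m, m < n → m ≠ i → (h m ↔ h (m + 1))) :
    ∀ m, m < n → (h m ↔ m ≤ i) := by
  intro m hm
  constructor
  · intro hhm
    by_contra hmi
    push_neg at hmi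
    have : h m ↔ h n :=
      iff_of_no_flip h m n (le_of_lt hm) (fun m' hm' hm'n => huniq m' hm'n (by omega))
    exact hnn (this.mp hhm)
  · intro hmi
    have : h 0 ↔ h m :=
      iff_of_no_flip h 0 m (Nat.zero_le m) (fun m' _ hm'm => huniq m' (by omega) (by omega))
    exact this.mp h0

lemma wt_nonneg {n : ℕ} (x : V n) : (0 : ℚ) ≤ wt n x := by
  cases x <;> simp [wt] <;> positivity

lemma cut_compl {n : ℕ} (S : Finset (V n)) : cut n Sᶜ = cut n S := by
  ext e
  simp only [cut, Finset.mem_filter, Finset.mem_univ, true_and, Finset.mem_compl]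
  tauto

lemma key (n : ℕ) (hn : 1 < n) (a b c : Fin n → ℕ)
    (hno : ¬ ∃ i j : Fin n, ∃ h : i.val + j.val + 1 < n,
        a i + b j < c ⟨i.val + j.val + 1, h⟩)
    (S : Finset (V n)) (hS : IsBisection n S) (hv : V.v ∈ S) :
    3 * (beta n a b c : ℚ) + (Tsum n a b c : ℚ) ≤ cutCost n a b c S := by
  have hn0 : 0 < n := by omega
  have hn1 : (1 : ℚ) ≤ (n : ℚ) := by exact_mod_cast hn0
  -- u ∉ S
  have hu : V.u ∉ S := by
    by_contra hu
    have hsub : ({V.u, V.v} : Finset (V n)) ⊆ S := by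
      intro x hx
      simp only [Finset.mem_insert, Finset.mem_singleton] at hx
      rcases hx with rfl | rfl <;> assumption
    have hle := Finset.sum_le_sum_of_subset_of_nonneg hsub (fun x _ _ => wt_nonneg x)
    have hpair : ∑ x ∈ ({V.u, V.v} : Finset (V n)), wt n x = 21 * n := by
      rw [Finset.sum_insert (by simp), Finset.sum_singleton]
      simp [wt]; ring
    rw [hpair] at hle
    have h12 : wOf n S = 12 * n := hS.1
    rw [wOf] at h12
    linarith
  by_cases hhuge : ∃ p : Fin 3, ((p, none) : E n) ∈ cut n S
  · obtain ⟨p, hp⟩ := hhuge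
    calc 3 * (beta n a b c : ℚ) + (Tsum n a b c : ℚ) ≤ ecost n a b c (p, none) :=
          ecost_none_ge a b c hn0 p
    _ ≤ cutCost n a b c S :=
          Finset.single_le_sum (fun e _ => ecost_nonneg a b c e) hp
  push_neg at hhuge
  -- endpoints of the three paths
  have hA0 : hA n S 0 := by
    have := (not_iff_not.mpr (mem_cut_eA hn0 S)).mp (hhuge 0)
    rw [not_not] at this
    exact this.mp hv
  have hB0 : hB n S 0 := by
    have := (not_iff_not.mpr (mem_cut_eB hn0 S)).mp (hhuge 1)
    rw [not_not] at this
    exact this.mp hv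
  have hC0 : ¬ hC n S 0 := by
    have := (not_iff_not.mpr (mem_cut_eC hn0 S)).mp (hhuge 2)
    rw [not_not] at this
    exact fun hc => hu (this.mpr hc)
  have hAn : ¬ hA n S n := by unfold hA; rw [dif_neg (lt_irrefl n)]; exact hu
  have hBn : ¬ hB n S n := by unfold hB; rw [dif_neg (lt_irrefl n)]; exact hu
  have hCn : hC n S n := by unfold hC; rw [dif_neg (lt_irrefl n)]; exact hv
  -- at least one cut edge per path
  obtain ⟨iA, hiAn, hfA⟩ := exists_flip (hA n S) n (fun h => hAn (h.mp hA0))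
  obtain ⟨iB, hiBn, hfB⟩ := exists_flip (hB n S) n (fun h => hBn (h.mp hB0))
  obtain ⟨iC, hiCn, hfC⟩ := exists_flip (hC n S) n (fun h => hC0 (h.mpr hCn))
  set eA' : E n := ((0 : Fin 3), some ⟨iA, hiAn⟩) with heA'
  set eB' : E n := ((1 : Fin 3), some ⟨iB, hiBn⟩) with heB'
  set eC' : E n := ((2 : Fin 3), some ⟨iC, hiCn⟩) with heC'
  have hmA : eA' ∈ cut n S := (mem_cut_A S ⟨iA, hiAn⟩).mpr hfA
  have hmB : eB' ∈ cut n S := (mem_cut_B S ⟨iB, hiBn⟩).mpr hfB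
  have hmC : eC' ∈ cut n S := (mem_cut_C S ⟨iC, hiCn⟩).mpr hfC
  rcases le_or_gt 4 (cut n S).card with hN | hN
  · -- at least 4 cut edges
    have h1 : (cut n S).card • (beta n a b c : ℚ) ≤ cutCost n a b c S :=
      Finset.card_nsmul_le_sum _ _ _ (fun e _ => ecost_ge_beta a b c e)
    rw [nsmul_eq_mul] at h1
    have hb0 : (0 : ℚ) ≤ (beta n a b c : ℚ) := Nat.cast_nonneg _
    have h4 : (4 : ℚ) ≤ ((cut n S).card : ℚ) := by exact_mod_cast hN
    have hTb := beta_ge_T a b c hn0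
    nlinarith
  · -- exactly one cut edge per path
    set cA := (cut n S).filter (fun e => e.1 = 0) with hcA
    set cB := (cut n S).filter (fun e => e.1 = 1) with hcB
    set cC := (cut n S).filter (fun e => e.1 = 2) with hcC
    have hmemA : eA' ∈ cA := Finset.mem_filter.mpr ⟨hmA, rfl⟩
    have hmemB : eB' ∈ cB := Finset.mem_filter.mpr ⟨hmB, rfl⟩
    have hmemC : eC' ∈ cC := Finset.mem_filter.mpr ⟨hmC, rfl⟩
    have hunion : cut n S = cA ∪ (cB ∪ cC) := by
      ext e
      simp only [hcA, hcB, hcC, Finset.mem_union, Finset.mem_filter]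
      have h3 : e.1 = 0 ∨ e.1 = 1 ∨ e.1 = 2 := by omega
      constructor
      · intro he
        rcases h3 with h | h | h
        · exact Or.inl ⟨he, h⟩
        · exact Or.inr (Or.inl ⟨he, h⟩)
        · exact Or.inr (Or.inr ⟨he, h⟩)
      · rintro (⟨he, _⟩ | ⟨he, _⟩ | ⟨he, _⟩) <;> exact he
    have hd2 : Disjoint cB cC := by
      rw [Finset.disjoint_left]
      intro e he1 he2
      rw [hcB, Finset.mem_filter] at he1
      rw [hcC, Finset.mem_filter] at he2
      omega
    have hd1 : Disjoint cA (cB ∪ cC) := by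
      rw [Finset.disjoint_left]
      intro e he1 he2
      rw [hcA, Finset.mem_filter] at he1
      rw [Finset.mem_union, hcB, hcC, Finset.mem_filter, Finset.mem_filter] at he2
      omega
    have hcard : (cut n S).card = cA.card + (cB.card + cC.card) := by
      rw [hunion, Finset.card_union_of_disjoint hd1, Finset.card_union_of_disjoint hd2]
    have hA1 : cA.card = 1 := by
      have h1 : 1 ≤ cA.card := Finset.card_pos.mpr ⟨eA', hmemA⟩
      have h2 : 1 ≤ cB.card := Finset.card_pos.mpr ⟨eB', hmemB⟩
      have h3 : 1 ≤ cC.card := Finset.card_pos.mpr ⟨eC', hmemC⟩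
      omega
    have hB1 : cB.card = 1 := by
      have h1 : 1 ≤ cA.card := Finset.card_pos.mpr ⟨eA', hmemA⟩
      have h2 : 1 ≤ cB.card := Finset.card_pos.mpr ⟨eB', hmemB⟩
      have h3 : 1 ≤ cC.card := Finset.card_pos.mpr ⟨eC', hmemC⟩
      omega
    have hC1 : cC.card = 1 := by
      have h1 : 1 ≤ cA.card := Finset.card_pos.mpr ⟨eA', hmemA⟩
      have h2 : 1 ≤ cB.card := Finset.card_pos.mpr ⟨eB', hmemB⟩
      have h3 : 1 ≤ cC.card := Finset.card_pos.mpr ⟨eC', hmemC⟩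
      omega
    have hcAeq : cA = {eA'} := by
      obtain ⟨x, hx⟩ := Finset.card_eq_one.mp hA1
      rw [hx] at hmemA ⊢
      rw [Finset.mem_singleton] at hmemA
      rw [hmemA]
    have hcBeq : cB = {eB'} := by
      obtain ⟨x, hx⟩ := Finset.card_eq_one.mp hB1
      rw [hx] at hmemB ⊢
      rw [Finset.mem_singleton] at hmemB
      rw [hmemB]
    have hcCeq : cC = {eC'} := by
      obtain ⟨x, hx⟩ := Finset.card_eq_one.mp hC1
      rw [hx] at hmemC ⊢
      rw [Finset.mem_singleton] at hmemC
      rw [hmemC]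
    -- unique flips
    have huniqA : ∀ m, m < n → m ≠ iA → (hA n S m ↔ hA n S (m + 1)) := by
      intro m hm hne
      by_contra hflip
      have h1 : ((0 : Fin 3), some (⟨m, hm⟩ : Fin n)) ∈ cA :=
        Finset.mem_filter.mpr ⟨(mem_cut_A S ⟨m, hm⟩).mpr hflip, rfl⟩
      rw [hcAeq, Finset.mem_singleton, heA'] at h1
      have : m = iA := by
        have := congrArg (fun e : E n => e.2) h1
        simp at this
        omega
      exact hne this
    have huniqB : ∀ m, m < n → m ≠ iB → (hB n S m ↔ hB n S (m + 1)) := by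
      intro m hm hne
      by_contra hflip
      have h1 : ((1 : Fin 3), some (⟨m, hm⟩ : Fin n)) ∈ cB :=
        Finset.mem_filter.mpr ⟨(mem_cut_B S ⟨m, hm⟩).mpr hflip, rfl⟩
      rw [hcBeq, Finset.mem_singleton, heB'] at h1
      have : m = iB := by
        have := congrArg (fun e : E n => e.2) h1
        simp at this
        omega
      exact hne this
    have huniqC : ∀ m, m < n → m ≠ iC → (hC n S m ↔ hC n S (m + 1)) := by
      intro m hm hne
      by_contra hflip
      have h1 : ((2 : Fin 3), some (⟨m, hm⟩ : Fin n)) ∈ cC :=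
        Finset.mem_filter.mpr ⟨(mem_cut_C S ⟨m, hm⟩).mpr hflip, rfl⟩
      rw [hcCeq, Finset.mem_singleton, heC'] at h1
      have : m = iC := by
        have := congrArg (fun e : E n => e.2) h1
        simp at this
        omega
      exact hne this
    -- structure of S on each path
    have charA : ∀ m : Fin n, V.A m ∈ S ↔ m.val ≤ iA := by
      intro m
      have h1 := prefix_char (hA n S) n iA hiAn hA0 hAn huniqA m.val m.isLt
      have h2 : hA n S m.val ↔ V.A m ∈ S := by unfold hA; rw [dif_pos m.isLt]
      exact h2.symm.trans h1
    have charB : ∀ m : Fin n, V.B m ∈ S ↔ m.val ≤ iB := by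
      intro m
      have h1 := prefix_char (hB n S) n iB hiBn hB0 hBn huniqB m.val m.isLt
      have h2 : hB n S m.val ↔ V.B m ∈ S := by unfold hB; rw [dif_pos m.isLt]
      exact h2.symm.trans h1
    have charC : ∀ m : Fin n, V.C m ∈ S ↔ iC < m.val := by
      intro m
      have h1 := prefix_char (fun m => ¬ hC n S m) n iC hiCn hC0 (not_not.mpr hCn)
        (fun m hm hne => not_iff_not.mpr (huniqC m hm hne)) m.val m.isLt
      have h2 : hC n S m.val ↔ V.C m ∈ S := by unfold hC; rw [dif_pos m.isLt]
      rw [← h2]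
      constructor
      · intro hc
        by_contra hlt
        push_neg at hlt
        exact (h1.mpr hlt) hc
      · intro hlt
        by_contra hc
        have := h1.mp hc
        omega
    -- cardinalities
    have cardA : (univ.filter fun m : Fin n => V.A m ∈ S).card = iA + 1 := by
      have : (univ.filter fun m : Fin n => V.A m ∈ S) = Finset.Iic (⟨iA, hiAn⟩ : Fin n) := by
        ext m
        simp [charA m, Finset.mem_Iic, Fin.le_def]
      rw [this, Fin.card_Iic]
    have cardB : (univ.filter fun m : Fin n => V.B m ∈ S).card = iB + 1 := by
      have : (univ.filter fun m : Fin n => V.B m ∈ S) = Finset.Iic (⟨iB, hiBn⟩ : Fin n) := by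
        ext m
        simp [charB m, Finset.mem_Iic, Fin.le_def]
      rw [this, Fin.card_Iic]
    have cardC : (univ.filter fun m : Fin n => V.C m ∈ S).card = n - 1 - iC := by
      have : (univ.filter fun m : Fin n => V.C m ∈ S) = Finset.Ioi (⟨iC, hiCn⟩ : Fin n) := by
        ext m
        simp [charC m, Finset.mem_Ioi, Fin.lt_def]
      rw [this, Fin.card_Ioi]
    -- the bisection equation
    have hw := wOf_eq S
    rw [if_neg hu, if_pos hv, cardA, cardB, cardC, hS.1] at hw
    have hnat : iA + 1 + (iB + 1) + (n - 1 - iC) = n := by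
      have h1 : ((iA + 1 + (iB + 1) + (n - 1 - iC) : ℕ) : ℚ) = (n : ℚ) := by
        push_cast at hw ⊢
        linarith
      exact_mod_cast h1
    have hiCeq : iC = iA + iB + 1 := by omega
    have hltn : iA + iB + 1 < n := by omega
    -- no-pair hypothesis
    have hcle : c ⟨iA + iB + 1, hltn⟩ ≤ a ⟨iA, hiAn⟩ + b ⟨iB, hiBn⟩ := by
      by_contra hlt
      push_neg at hlt
      exact hno ⟨⟨iA, hiAn⟩, ⟨iB, hiBn⟩, hltn, hlt⟩
    have hfinC : (⟨iC, hiCn⟩ : Fin n) = ⟨iA + iB + 1, hltn⟩ := by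
      apply Fin.ext
      simpa using hiCeq
    -- compute the cost
    have hcost : cutCost n a b c S =
        ecost n a b c eA' + (ecost n a b c eB' + ecost n a b c eC') := by
      rw [cutCost, hunion, Finset.sum_union hd1, Finset.sum_union hd2,
        hcAeq, hcBeq, hcCeq, Finset.sum_singleton, Finset.sum_singleton,
        Finset.sum_singleton]
    rw [hcost, heA', heB', heC', ecost_A, ecost_B, ecost_C, hfinC]
    have : (c ⟨iA + iB + 1, hltn⟩ : ℚ) ≤ (a ⟨iA, hiAn⟩ : ℚ) + (b ⟨iB, hiBn⟩ : ℚ) := by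
      exact_mod_cast hcle
    linarith

/-! ### The construction for the forward direction -/

def mkP (n : ℕ) (i j k : Fin n) : V n → Bool
  | V.v => true
  | V.A m => decide (m.val ≤ i.val)
  | V.B m => decide (m.val ≤ j.val)
  | V.C m => decide (k.val < m.val)
  | V.u => false

def mkS (n : ℕ) (i j k : Fin n) : Finset (V n) :=
  univ.filter (fun x => mkP n i j k x = true)

section mk
variable {n : ℕ} (i j k : Fin n)

lemma u_notMem_mkS : V.u ∉ mkS n i j k := by simp [mkS, mkP]
lemma v_mem_mkS : V.v ∈ mkS n i j k := by simp [mkS, mkP]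
lemma A_mem_mkS (m : Fin n) : V.A m ∈ mkS n i j k ↔ m.val ≤ i.val := by simp [mkS, mkP]
lemma B_mem_mkS (m : Fin n) : V.B m ∈ mkS n i j k ↔ m.val ≤ j.val := by simp [mkS, mkP]
lemma C_mem_mkS (m : Fin n) : V.C m ∈ mkS n i j k ↔ k.val < m.val := by simp [mkS, mkP]

lemma hA_mkS (m : ℕ) (hm : m ≤ n) : hA n (mkS n i j k) m ↔ m ≤ i.val := by
  unfold hA
  split
  · rw [A_mem_mkS]
  · have : m = n := by omega
    subst this
    constructor
    · intro h
      exact absurd h (u_notMem_mkS i j k)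
    · intro h
      exact absurd h (by have := i.isLt; omega)
lemma hB_mkS (m : ℕ) (hm : m ≤ n) : hB n (mkS n i j k) m ↔ m ≤ j.val := by
  unfold hB
  split
  · rw [B_mem_mkS]
  · have : m = n := by omega
    subst this
    constructor
    · intro h
      exact absurd h (u_notMem_mkS i j k)
    · intro h
      exact absurd h (by have := j.isLt; omega)
lemma hC_mkS (m : ℕ) (hm : m ≤ n) : hC n (mkS n i j k) m ↔ k.val < m := by
  unfold hC
  split
  · rw [C_mem_mkS]
  · have : m = n := by omega
    subst this
    constructor
    · intro _
      exact k.isLt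
    · intro _
      exact v_mem_mkS i j k

lemma cut_mkS :
    cut n (mkS n i j k) =
      {((0 : Fin 3), some i), ((1 : Fin 3), some j), ((2 : Fin 3), some k)} := by
  have hn0 : 0 < n := k.pos
  ext e
  obtain ⟨p, o⟩ := e
  have hmem : ((p, o) : E n) ∈
      ({((0 : Fin 3), some i), ((1 : Fin 3), some j), ((2 : Fin 3), some k)} : Finset (E n)) ↔
      ((p = 0 ∧ o = some i) ∨ (p = 1 ∧ o = some j) ∨ (p = 2 ∧ o = some k)) := by
    simp [Prod.ext_iff]
  rw [hmem]
  have hp : p = 0 ∨ p = 1 ∨ p = 2 := by omega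
  have h01 : ¬((0 : Fin 3) = 1) := by decide
  have h02 : ¬((0 : Fin 3) = 2) := by decide
  have h10 : ¬((1 : Fin 3) = 0) := by decide
  have h12 : ¬((1 : Fin 3) = 2) := by decide
  have h20 : ¬((2 : Fin 3) = 0) := by decide
  have h21 : ¬((2 : Fin 3) = 1) := by decide
  rcases hp with rfl | rfl | rfl
  · cases o with
    | none =>
      rw [mem_cut_eA hn0, hA_mkS i j k 0 (le_of_lt hn0)]
      simp [v_mem_mkS, h01, h02]
    | some m =>
      rw [mem_cut_A, hA_mkS i j k m.val (le_of_lt m.isLt),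
        hA_mkS i j k (m.val + 1) m.isLt]
      simp only [h01, h02, false_and, or_false, false_or, true_and, Option.some.injEq]
      rw [Fin.ext_iff]
      have := i.isLt
      have := m.isLt
      constructor
      · intro h
        by_contra hne
        exact h (by omega)
      · intro h hiff
        omega
  · cases o with
    | none =>
      rw [mem_cut_eB hn0, hB_mkS i j k 0 (le_of_lt hn0)]
      simp [v_mem_mkS, h10, h12]
    | some m =>
      rw [mem_cut_B, hB_mkS i j k m.val (le_of_lt m.isLt),
        hB_mkS i j k (m.val + 1) m.isLt]
      simp only [h10, h12, false_and, or_false, false_or, true_and, Option.some.injEq]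
      rw [Fin.ext_iff]
      have := j.isLt
      have := m.isLt
      constructor
      · intro h
        by_contra hne
        exact h (by omega)
      · intro h hiff
        omega
  · cases o with
    | none =>
      rw [mem_cut_eC hn0, hC_mkS i j k 0 (le_of_lt hn0)]
      simp [u_notMem_mkS, h20, h21]
    | some m =>
      rw [mem_cut_C, hC_mkS i j k m.val (le_of_lt m.isLt),
        hC_mkS i j k (m.val + 1) m.isLt]
      simp only [h20, h21, false_and, or_false, false_or, true_and, Option.some.injEq]
      rw [Fin.ext_iff]
      have := k.isLt
      have := m.isLt
      constructor
      · intro h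
        by_contra hne
        exact h (by omega)
      · intro h hiff
        omega

end mk

lemma mkS_bisection {n : ℕ} (i j k : Fin n) (hk : k.val = i.val + j.val + 1) :
    IsBisection n (mkS n i j k) := by
  have hw := wOf_eq (mkS n i j k)
  rw [if_neg (u_notMem_mkS i j k), if_pos (v_mem_mkS i j k)] at hw
  have cA : (univ.filter fun m : Fin n => V.A m ∈ mkS n i j k).card = i.val + 1 := by
    have : (univ.filter fun m : Fin n => V.A m ∈ mkS n i j k) = Finset.Iic i := by
      ext m
      rw [Finset.mem_filter, Finset.mem_Iic, Fin.le_def]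
      simp [A_mem_mkS i j k m]
    rw [this, Fin.card_Iic]
  have cB : (univ.filter fun m : Fin n => V.B m ∈ mkS n i j k).card = j.val + 1 := by
    have : (univ.filter fun m : Fin n => V.B m ∈ mkS n i j k) = Finset.Iic j := by
      ext m
      rw [Finset.mem_filter, Finset.mem_Iic, Fin.le_def]
      simp [B_mem_mkS i j k m]
    rw [this, Fin.card_Iic]
  have cC : (univ.filter fun m : Fin n => V.C m ∈ mkS n i j k).card = n - 1 - k.val := by
    have : (univ.filter fun m : Fin n => V.C m ∈ mkS n i j k) = Finset.Ioi k := by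
      ext m
      rw [Finset.mem_filter, Finset.mem_Ioi, Fin.lt_def]
      simp [C_mem_mkS i j k m]
    rw [this, Fin.card_Ioi]
  rw [cA, cB, cC] at hw
  have hkn := k.isLt
  have hnat : i.val + 1 + (j.val + 1) + (n - 1 - k.val) = n := by omega
  rw [hnat] at hw
  have h1 : wOf n (mkS n i j k) = 12 * n := by
    rw [hw]; ring
  refine ⟨h1, ?_⟩
  have h2 := wOf_add_compl (mkS n i j k)
  rw [h1] at h2
  linarith

/-- The minimum bisection cost is at least `3β + T` iff there is no pair `i, j` (1-indexed)
with `i + j ≤ n` and `a_i + b_j < c_{i+j}`. -/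
theorem min_bisection_iff_convolution (n : ℕ) (hn : 1 < n) (a b c : Fin n → ℕ)
    (ha : ∀ i, 0 < a i) (hb : ∀ i, 0 < b i) (hc : ∀ i, 0 < c i) :
    (∀ S : Finset (V n), IsBisection n S →
      3 * (beta n a b c : ℚ) + (Tsum n a b c : ℚ) ≤ cutCost n a b c S)
    ↔ ¬ ∃ i j : Fin n, ∃ h : i.val + j.val + 1 < n,
        a i + b j < c ⟨i.val + j.val + 1, h⟩ := by
  constructor
  · intro hall
    rintro ⟨i, j, hlt, hab⟩
    set k : Fin n := ⟨i.val + j.val + 1, hlt⟩ with hkdef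
    have hbis := mkS_bisection i j k rfl
    have hcost := hall (mkS n i j k) hbis
    have hcut := cut_mkS i j k
    have hne1 : ((0 : Fin 3), some i) ≠ ((1 : Fin 3), some j) := by
      intro h
      have h1 : (0 : Fin 3) = 1 := congrArg Prod.fst h
      exact absurd h1 (by decide)
    have hne2 : ((0 : Fin 3), some i) ≠ ((2 : Fin 3), some k) := by
      intro h
      have h1 : (0 : Fin 3) = 2 := congrArg Prod.fst h
      exact absurd h1 (by decide)
    have hne3 : ((1 : Fin 3), some j) ≠ ((2 : Fin 3), some k) := by
      intro h
      have h1 : (1 : Fin 3) = 2 := congrArg Prod.fst h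
      exact absurd h1 (by decide)
    have hval : cutCost n a b c (mkS n i j k) =
        ecost n a b c (0, some i) + ecost n a b c (1, some j) + ecost n a b c (2, some k) := by
      rw [cutCost, hcut]
      rw [Finset.sum_insert (by simp [hne1, hne2]),
        Finset.sum_insert (by simp [hne3]), Finset.sum_singleton]
      ring
    rw [hval, ecost_A, ecost_B, ecost_C] at hcost
    have habq : (a i : ℚ) + (b j : ℚ) < (c k : ℚ) := by exact_mod_cast hab
    linarith
  · intro hno S hS
    by_cases hv : V.v ∈ S
    · exact key n hn a b c hno S hS hv
    · have hv' : V.v ∈ Sᶜ := Finset.mem_compl.mpr hv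
      have hS' : IsBisection n Sᶜ := ⟨hS.2, by rw [compl_compl]; exact hS.1⟩
      have := key n hn a b c hno Sᶜ hS' hv'
      rwa [cutCost, cut_compl, ← cutCost] at this

end SCLB
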